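/- Let f be a nonconstant real polynomial in d variables that is bounded from below on ℝ^d, and let n be its total degree. Then n is even and the degree-n homogeneous part f_n satisfies f_n(x) ≥ 0 for every x ∈ ℝ^d. -/

import Mathlib

open MvPolynomial Polynomial Filter

/-- Evaluating a homogeneous polynomial at `t • x` scales by `t ^ k`. -/
lemma eval_mul_homog {d k : ℕ} {p : MvPolynomial (Fin d) ℝ} (hp : p.IsHomogeneous k)
    (t : ℝ) (x : Fin d → ℝ) :
    MvPolynomial.eval (fun i => t * x i) p = t ^ k * MvPolynomial.eval x p := by
  rw [MvPolynomial.eval_eq', MvPolynomial.eval_eq', Finset.mul_sum]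
  refine Finset.sum_congr rfl fun m hm => ?_
  have hdm : (Finsupp.degree m) = k := by
    rw [Finsupp.degree_eq_weight_one]
    exact hp (MvPolynomial.mem_support_iff.mp hm)
  have hsum : ∑ i, m i = k := by
    rw [← hdm, Finsupp.degree]
    exact (Finset.sum_subset (Finset.subset_univ _)
      (fun i _ hi => Finsupp.notMem_support_iff.mp hi)).symm
  calc MvPolynomial.coeff m p * ∏ i, (t * x i) ^ m i
      = MvPolynomial.coeff m p * ((∏ i, t ^ m i) * ∏ i, x i ^ m i) := by
        rw [← Finset.prod_mul_distrib]; simp [mul_pow]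
    _ = t ^ k * (MvPolynomial.coeff m p * ∏ i, x i ^ m i) := by
        rw [Finset.prod_pow_eq_pow_sum, hsum]; ring

/-- A univariate real polynomial bounded below has positive leading coefficient and
even degree, provided its degree is positive. -/
lemma bddBelow_poly {P : Polynomial ℝ} (hdeg : 0 < P.degree)
    {μ : ℝ} (h : ∀ t : ℝ, μ ≤ P.eval t) :
    0 < P.leadingCoeff ∧ Even P.natDegree := by
  have hP0 : P ≠ 0 := fun h0 => by simp [h0] at hdeg
  have hbd : ¬ Tendsto (fun t => P.eval t) atTop atBot := by
    intro ht
    obtain ⟨t, htt⟩ := (Filter.tendsto_atBot.mp ht (μ - 1)).exists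
    linarith [h t]
  have hlc : 0 < P.leadingCoeff := by
    by_contra hle
    exact hbd (P.tendsto_atBot_of_leadingCoeff_nonpos hdeg (not_lt.mp hle))
  refine ⟨hlc, ?_⟩
  by_contra hodd
  rw [Nat.not_even_iff_odd] at hodd
  -- consider P.comp (-X): same degree, leading coeff = (-1)^n * lc < 0
  set Q := P.comp (-Polynomial.X) with hQ
  have hdQ : Q.natDegree = P.natDegree := by
    rw [hQ, Polynomial.natDegree_comp]
    simp
  have hQ0 : Q ≠ 0 := by
    intro h0
    have : P.natDegree ≠ 0 := by
      have := Polynomial.natDegree_pos_iff_degree_pos.mpr hdeg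
      omega
    rw [h0, Polynomial.natDegree_zero] at hdQ
    exact this hdQ.symm
  have hdegQ : 0 < Q.degree := by
    rw [Polynomial.degree_eq_natDegree hQ0]
    exact_mod_cast (by
      rw [hdQ]; exact Polynomial.natDegree_pos_iff_degree_pos.mpr hdeg)
  have hlcQ : Q.leadingCoeff = (-1) ^ P.natDegree * P.leadingCoeff := by
    rw [hQ, Polynomial.leadingCoeff_comp (by simp)]
    simp [Polynomial.leadingCoeff_neg, mul_comm]
  have hlcQ' : Q.leadingCoeff ≤ 0 := by
    rw [hlcQ, hodd.neg_one_pow]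
    nlinarith
  have := Q.tendsto_atBot_of_leadingCoeff_nonpos hdegQ hlcQ'
  have hbdQ : ¬ Tendsto (fun t => Q.eval t) atTop atBot := by
    intro ht
    obtain ⟨t, htt⟩ := (Filter.tendsto_atBot.mp ht (μ - 1)).exists
    have : Q.eval t = P.eval (-t) := by simp [hQ]
    linarith [h (-t)]
  exact hbdQ this

/-- A necessary condition: if a nonconstant polynomial `f` is bounded from below
on `ℝ^d`, then its total degree is even and its top homogeneous part is
nonnegative everywhere. -/
theorem even_degree_and_nonneg_top_of_bddBelow (d : ℕ) (f : MvPolynomial (Fin d) ℝ)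
    (hnc : 0 < f.totalDegree)
    (hbdd : ∃ μ : ℝ, ∀ x : Fin d → ℝ, μ ≤ eval x f) :
    Even f.totalDegree ∧
      ∀ x : Fin d → ℝ, 0 ≤ eval x (homogeneousComponent f.totalDegree f) := by
  obtain ⟨μ, hμ⟩ := hbdd
  set n := f.totalDegree with hn
  -- the univariate polynomial obtained by restricting f to the line through x
  set P : (Fin d → ℝ) → Polynomial ℝ := fun x =>
    ∑ k ∈ Finset.range (n + 1),
      Polynomial.C (MvPolynomial.eval x (homogeneousComponent k f)) * Polynomial.X ^ k with hP
  have hPeval : ∀ (x : Fin d → ℝ) (t : ℝ),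
      (P x).eval t = MvPolynomial.eval (fun i => t * x i) f := by
    intro x t
    conv_rhs => rw [← f.sum_homogeneousComponent]
    rw [map_sum, hP]
    simp only [Polynomial.eval_finset_sum, Polynomial.eval_mul, Polynomial.eval_C,
      Polynomial.eval_pow, Polynomial.eval_X]
    refine Finset.sum_congr rfl fun k _ => ?_
    rw [eval_mul_homog (homogeneousComponent_isHomogeneous k f) t x]
    ring
  have hPcoeff : ∀ (x : Fin d → ℝ) (k : ℕ), k ≤ n →
      (P x).coeff k = MvPolynomial.eval x (homogeneousComponent k f) := by
    intro x k hk
    rw [hP]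
    simp only [Polynomial.finset_sum_coeff, Polynomial.coeff_C_mul, Polynomial.coeff_X_pow]
    rw [Finset.sum_eq_single k]
    · simp
    · intro b _ hb; simp [hb.symm]
    · intro hk'; exact absurd (Finset.mem_range.mpr (by omega)) hk'
  have hPdegle : ∀ x : Fin d → ℝ, (P x).natDegree ≤ n := by
    intro x
    rw [hP]
    refine Polynomial.natDegree_sum_le_of_forall_le _ _ fun k hk => ?_
    refine (Polynomial.natDegree_C_mul_le _ _).trans ?_
    simp only [Polynomial.natDegree_X_pow]
    exact Nat.lt_succ_iff.mp (Finset.mem_range.mp hk)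
  have hPbdd : ∀ (x : Fin d → ℝ) (t : ℝ), μ ≤ (P x).eval t := by
    intro x t; rw [hPeval]; exact hμ _
  -- key: for each x, if eval x (f_n) ≠ 0, then P x has degree n with that leading coeff
  have key : ∀ x : Fin d → ℝ,
      MvPolynomial.eval x (homogeneousComponent n f) ≠ 0 →
      0 < MvPolynomial.eval x (homogeneousComponent n f) ∧ Even n := by
    intro x hx
    have hc : (P x).coeff n ≠ 0 := by rw [hPcoeff x n le_rfl]; exact hx
    have hdeg : (P x).natDegree = n :=
      le_antisymm (hPdegle x) (Polynomial.le_natDegree_of_ne_zero hc)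
    have hlc : (P x).leadingCoeff = MvPolynomial.eval x (homogeneousComponent n f) := by
      rw [Polynomial.leadingCoeff, hdeg, hPcoeff x n le_rfl]
    have hP0 : P x ≠ 0 := fun h0 => hc (by simp [h0])
    have hdpos : 0 < (P x).degree := by
      rw [Polynomial.degree_eq_natDegree hP0, hdeg]
      exact_mod_cast hnc
    obtain ⟨h1, h2⟩ := bddBelow_poly hdpos (hPbdd x)
    rw [hlc] at h1
    rw [hdeg] at h2
    exact ⟨h1, h2⟩
  -- f_n ≠ 0, so there is a point where it evaluates to a nonzero value
  have hfn : homogeneousComponent n f ≠ 0 := by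
    intro h0
    have hf0 : f ≠ 0 := fun hf => by rw [hn, hf] at hnc; simp at hnc
    obtain ⟨m, hm, hmd⟩ := Finset.exists_mem_eq_sup f.support
      (MvPolynomial.support_nonempty.mpr hf0) (fun m => (m.sum fun _ e => e))
    have hmdeg : Finsupp.degree m = n := by
      rw [hn, MvPolynomial.totalDegree, hmd]; rfl
    have := MvPolynomial.coeff_homogeneousComponent (R := ℝ) (σ := Fin d) n f m
    rw [h0] at this
    simp only [MvPolynomial.coeff_zero] at this
    rw [if_pos hmdeg] at this
    exact MvPolynomial.mem_support_iff.mp hm this.symm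
  obtain ⟨x₀, hx₀⟩ : ∃ x₀ : Fin d → ℝ,
      MvPolynomial.eval x₀ (homogeneousComponent n f) ≠ 0 := by
    by_contra hall
    push_neg at hall
    exact hfn (MvPolynomial.funext fun x => by simp [hall x])
  refine ⟨(key x₀ hx₀).2, fun x => ?_⟩
  by_contra hneg
  push_neg at hneg
  exact absurd (key x hneg.ne).1 (by linarith)
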